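/- arXiv:2506.10908 — 2 statements merged into one kernel-verified Lean document; each statement's English description precedes it below -/
import Mathlib

section
/- Suppose L̂^{u}(α) is a random upper confidence bound satisfying ℙ(L^{u*} ≤ L̂^{u*}(α)) ≥ 1−α at the oracle threshold u*. Define the random threshold û = min{U_i : L̂^{U_i}(α) > ε} (set û = +∞ if the set is empty, in which case û ≤ u* fails only if u* is finite; assume the sets are nonempty). Then ℙ(û ≤ u*) ≥ 1−α. -/
open Finset MeasureTheory

/-- If `L̂^{u*}(α)` is a valid level-`(1-α)` upper confidence bound on `L^{u*}`, then the
empirical threshold `û = min {U_i : L̂^{U_i} > ε}` satisfies `ℙ(û ≤ u*) ≥ 1-α`. -/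
theorem empirical_threshold_below_oracle
    {Ω : Type*} [MeasurableSpace Ω] (P : Measure Ω) [IsProbabilityMeasure P]
    (n : ℕ) (U : Fin n → ℝ) (l : Fin n → ℝ) (hl : ∀ i, 0 ≤ l i)
    (ε α : ℝ)
    (L : ℝ → ℝ)
    (hL : ∀ u, L u = (1 / (n : ℝ)) *
      ∑ i : Fin n, l i * (if U i ≤ u then (1 : ℝ) else 0))
    (ustar : ℝ)
    (hustar_mem : ∃ i, U i = ustar ∧ ε < L (U i))
    (hustar_min : ∀ i, ε < L (U i) → ustar ≤ U i)
    (Lhat : ℝ → Ω → ℝ)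
    (hvalid : ENNReal.ofReal (1 - α) ≤ P {ω | L ustar ≤ Lhat ustar ω})
    (uhat : Ω → ℝ)
    (huhat_mem : ∀ ω, ∃ i, U i = uhat ω ∧ ε < Lhat (U i) ω)
    (huhat_min : ∀ ω i, ε < Lhat (U i) ω → uhat ω ≤ U i) :
    ENNReal.ofReal (1 - α) ≤ P {ω | uhat ω ≤ ustar} := by
  refine le_trans hvalid (measure_mono ?_)
  obtain ⟨i, hi, hεi⟩ := hustar_mem
  intro ω hω
  have h : ε < Lhat (U i) ω := lt_of_lt_of_le (hi ▸ hεi) (hi ▸ hω)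
  exact le_of_le_of_eq (huhat_min ω i h) hi
end

section
/- Under the assumptions of the previous statements, the PAC labels Ỹ_i = Y_i 1{U_i ≥ û} + Ŷ_i 1{U_i < û} satisfy ℙ( (1/n) Σ_{i=1}^n ℓ(Y_i, Ỹ_i) ≤ ε ) ≥ 1−α. -/
open Finset MeasureTheory

/-- PAC labels: with probability at least `1-α`, the labels produced with the empirical
threshold `û` have average loss at most `ε`. -/
theorem pac_labels
    {Ω : Type*} [MeasurableSpace Ω] (P : Measure Ω) [IsProbabilityMeasure P]
    (n : ℕ) {β : Type*} (Y Yhat : Fin n → β) (U : Fin n → ℝ)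
    (loss : β → β → ℝ) (ε α : ℝ)
    (hloss_nonneg : ∀ y y', 0 ≤ loss y y') (hloss_refl : ∀ y, loss y y = 0)
    (hε : 0 ≤ ε)
    (L : ℝ → ℝ)
    (hL : ∀ u, L u = (1 / (n : ℝ)) *
      ∑ i : Fin n, loss (Y i) (Yhat i) * (if U i ≤ u then (1 : ℝ) else 0))
    (ustar : ℝ)
    (hustar_mem : ∃ i, U i = ustar ∧ ε < L (U i))
    (hustar_min : ∀ i, ε < L (U i) → ustar ≤ U i)
    (Lhat : ℝ → Ω → ℝ)
    (hvalid : ENNReal.ofReal (1 - α) ≤ P {ω | L ustar ≤ Lhat ustar ω})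
    (uhat : Ω → ℝ)
    (huhat_mem : ∀ ω, ∃ i, U i = uhat ω ∧ ε < Lhat (U i) ω)
    (huhat_min : ∀ ω i, ε < Lhat (U i) ω → uhat ω ≤ U i)
    (Ytilde : Fin n → Ω → β)
    (hYtilde : ∀ i ω, Ytilde i ω = if uhat ω ≤ U i then Y i else Yhat i) :
    ENNReal.ofReal (1 - α) ≤
      P {ω | (1 / (n : ℝ)) * ∑ i : Fin n, loss (Y i) (Ytilde i ω) ≤ ε} := by
  refine le_trans hvalid (measure_mono ?_)
  intro ω hω
  simp only [Set.mem_setOf_eq] at hω ⊢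
  obtain ⟨i0, hi0, hli0⟩ := hustar_mem
  have hεL : ε < Lhat ustar ω := lt_of_lt_of_le (hi0 ▸ hli0) hω
  have huu : uhat ω ≤ ustar := by
    have := huhat_min ω i0 (by rw [hi0]; exact hεL)
    rwa [hi0] at this
  rcases (Finset.univ.filter (fun i => U i < uhat ω)).eq_empty_or_nonempty with hS | hS
  · have hall : ∀ i : Fin n, uhat ω ≤ U i := by
      intro i
      by_contra h
      exact (Finset.eq_empty_iff_forall_notMem.mp hS i)
        (Finset.mem_filter.mpr ⟨Finset.mem_univ i, not_le.mp h⟩)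
    have : ∑ i : Fin n, loss (Y i) (Ytilde i ω) = 0 := by
      apply Finset.sum_eq_zero
      intro i _
      rw [hYtilde, if_pos (hall i), hloss_refl]
    rw [this, mul_zero]
    exact hε
  · obtain ⟨j, hjmem, hmax⟩ := Finset.exists_max_image _ U hS
    have hj : U j < uhat ω := (Finset.mem_filter.mp hjmem).2
    have hLj : L (U j) ≤ ε := by
      by_contra h
      exact absurd (hustar_min j (lt_of_not_ge h)) (not_le.mpr (lt_of_lt_of_le hj huu))
    calc (1/(n:ℝ)) * ∑ i : Fin n, loss (Y i) (Ytilde i ω)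
        ≤ (1/(n:ℝ)) * ∑ i : Fin n, loss (Y i) (Yhat i) * (if U i ≤ U j then 1 else 0) := by
          apply mul_le_mul_of_nonneg_left _ (by positivity)
          apply Finset.sum_le_sum
          intro i _
          rw [hYtilde]
          by_cases h : uhat ω ≤ U i
          · rw [if_pos h, hloss_refl]
            exact mul_nonneg (hloss_nonneg _ _) (by split <;> norm_num)
          · push_neg at h
            have : U i ≤ U j := hmax i (Finset.mem_filter.mpr ⟨Finset.mem_univ i, h⟩)
            rw [if_neg (not_le.mpr h), if_pos this, mul_one]
      _ = L (U j) := (hL (U j)).symm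
      _ ≤ ε := hLj
end
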